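/- Let A, p be real numbers with A ≠ 0, and let u₁, u₂ be real numbers with u₁³ ≠ u₂³. Then it is impossible that both A·(4p³ + 6p² + p + 1) = (−2p³ + 3p² + 8p − 1)·u₁³ and A·(4p³ + 6p² + p + 1) = (−2p³ + 3p² + 8p − 1)·u₂³ hold. -/

import Mathlib

theorem stmt_4 (A p u₁ u₂ : ℝ) (hA : A ≠ 0) (hu : u₁ ^ 3 ≠ u₂ ^ 3) :
    ¬ (A * (4 * p ^ 3 + 6 * p ^ 2 + p + 1)
        = (-2 * p ^ 3 + 3 * p ^ 2 + 8 * p - 1) * u₁ ^ 3 ∧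
       A * (4 * p ^ 3 + 6 * p ^ 2 + p + 1)
        = (-2 * p ^ 3 + 3 * p ^ 2 + 8 * p - 1) * u₂ ^ 3) := by
  rintro ⟨h1, h2⟩
  have hc : (-2 * p ^ 3 + 3 * p ^ 2 + 8 * p - 1) = 0 := by
    by_contra hc
    exact hu (by
      have := h1.symm.trans h2
      rw [mul_eq_mul_left_iff] at this
      rcases this with h | h
      · exact h
      · exact absurd (by linarith) hc)
  have hq : 4 * p ^ 3 + 6 * p ^ 2 + p + 1 = 0 := by
    have := h1
    rw [hc, zero_mul] at this
    exact (mul_eq_zero.mp this).resolve_left hA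
  nlinarith [sq_nonneg p, sq_nonneg (p+1), sq_nonneg (p-1), sq_nonneg (2*p+1), sq_nonneg (p^2+p), sq_nonneg (12*p+17), sq_nonneg (p^2-1)]
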